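/- Fix an integer n ≥ 1, real numbers σ_0 = 1, σ_1, …, σ_{2n} and ξ_1, …, ξ_{2n}, and let θ : ℝ → ℝ be Lebesgue-measurable with θ(x) > 0 for all x and ∫ (1+|x|^{2n}) θ(x) (1 + |log θ(x)| + log(1+|x|)) dx < ∞. For real polynomials P(x) = 1 + Σ_{k=1}^{2n} p_k x^k and Q(x) = Σ_{k=0}^{2n} q_k x^k, both of degree exactly 2n and strictly positive at every point of ℝ, define J(P,Q) = Σ_{k=0}^{2n} σ_k q_k − Σ_{k=1}^{2n} ξ_k p_k + ∫ P(x)θ(x) log(P(x)θ(x)/Q(x)) dx − ∫ P(x)θ(x) dx. Then: (i) for each k ∈ {1,…,2n}, the map ε ↦ J(P + ε x^k, Q) is well defined for ε in a neighborhood of 0 and is differentiable at ε = 0 with derivative −ξ_k + ∫ x^k θ(x) log(P(x)θ(x)/Q(x)) dx; and (ii) for each k ∈ {0,…,2n}, the map ε ↦ J(P, Q + ε x^k) is well defined for ε in a neighborhood of 0 and is differentiable at ε = 0 with derivative σ_k − ∫ x^k P(x)θ(x)/Q(x) dx. -/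

import Mathlib

open MeasureTheory Polynomial Real

private lemma aux_pow_le (m k : ℕ) (hk : k ≤ m) (x : ℝ) : |x| ^ k ≤ 1 + |x| ^ m := by
  rcases le_or_gt (|x|) 1 with h | h
  · have h1 : |x| ^ k ≤ 1 := pow_le_one₀ (abs_nonneg x) h
    have h2 : (0:ℝ) ≤ |x| ^ m := pow_nonneg (abs_nonneg x) m
    linarith
  · have : |x| ^ k ≤ |x| ^ m := pow_le_pow_right₀ h.le hk
    linarith

private lemma aux_upper (m : ℕ) (R : Polynomial ℝ) (hdeg : R.natDegree ≤ m) :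
    ∃ C > (0:ℝ), ∀ x : ℝ, |R.eval x| ≤ C * (1 + |x| ^ m) := by
  refine ⟨(∑ i ∈ Finset.range (R.natDegree + 1), |R.coeff i|) + 1, by positivity, fun x => ?_⟩
  have h1 : |R.eval x| ≤ ∑ i ∈ Finset.range (R.natDegree + 1), |R.coeff i| * |x| ^ i := by
    rw [eval_eq_sum_range]
    refine (Finset.abs_sum_le_sum_abs _ _).trans (le_of_eq ?_)
    refine Finset.sum_congr rfl fun i _ => ?_
    rw [abs_mul, abs_pow]
  have h2 : ∑ i ∈ Finset.range (R.natDegree + 1), |R.coeff i| * |x| ^ i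
      ≤ ∑ i ∈ Finset.range (R.natDegree + 1), |R.coeff i| * (1 + |x| ^ m) := by
    refine Finset.sum_le_sum fun i hi => ?_
    have hi' : i ≤ m := le_trans (Nat.lt_succ_iff.mp (Finset.mem_range.mp hi)) hdeg
    exact mul_le_mul_of_nonneg_left (aux_pow_le m i hi' x) (abs_nonneg _)
  rw [← Finset.sum_mul] at h2
  have h3 : (0:ℝ) ≤ 1 + |x| ^ m := by positivity
  nlinarith [h1.trans h2]

private lemma aux_lc_pos (R : Polynomial ℝ) (hdeg : 0 < R.natDegree)
    (hpos : ∀ x, 0 < R.eval x) : 0 < R.leadingCoeff := by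
  by_contra h
  push_neg at h
  have hd : 0 < R.degree := natDegree_pos_iff_degree_pos.mp hdeg
  have := (R.tendsto_atBot_of_leadingCoeff_nonpos hd h).eventually
    (Filter.eventually_lt_atBot 0)
  obtain ⟨x, hx⟩ := this.exists
  exact absurd (hpos x) (not_lt.mpr hx.le)

private lemma aux_lower (m : ℕ) (hm : 0 < m) (hme : Even m) (R : Polynomial ℝ)
    (hdeg : R.natDegree = m) (hpos : ∀ x, 0 < R.eval x) :
    ∃ c > (0:ℝ), ∀ x : ℝ, c * (1 + |x| ^ m) ≤ R.eval x := by
  have hR0 : R ≠ 0 := fun h => by simpa [h] using hpos 0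
  set T : Polynomial ℝ := X ^ m + Polynomial.C 1 with hT
  have hTdeg : T.natDegree = m := natDegree_X_pow_add_C
  have hTlc : T.leadingCoeff = 1 := leadingCoeff_X_pow_add_C hm
  have hTeval : ∀ x : ℝ, T.eval x = 1 + |x| ^ m := by
    intro x; simp [hT, hme.pow_abs x]; ring
  have hTpos : ∀ x : ℝ, 0 < T.eval x := fun x => by
    rw [hTeval]; positivity
  have hT0 : T ≠ 0 := fun h => by simpa [h] using hTpos 0
  have hdegeq : R.degree = T.degree := by
    rw [degree_eq_natDegree hR0, degree_eq_natDegree hT0, hdeg, hTdeg]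
  set h : ℝ → ℝ := fun x => R.eval x / T.eval x with hh
  have hL1 : 0 < R.leadingCoeff := aux_lc_pos R (hdeg ▸ hm) hpos
  have htop : Filter.Tendsto h Filter.atTop (nhds (R.leadingCoeff / T.leadingCoeff)) :=
    div_tendsto_leadingCoeff_div_of_degree_eq R T hdegeq
  rw [hTlc, div_one] at htop
  obtain ⟨M1, hM1⟩ := (htop.eventually (lt_mem_nhds (half_lt_self hL1))).exists_forall_of_atTop
  set R2 : Polynomial ℝ := R.comp (-X) with hR2
  have hR2eval : ∀ x : ℝ, R2.eval x = R.eval (-x) := by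
    intro x; simp [hR2, eval_comp]
  have hR2pos : ∀ x, 0 < R2.eval x := fun x => by rw [hR2eval]; exact hpos _
  have hR2deg : R2.natDegree = m := by
    rw [hR2, natDegree_comp]
    simp [hdeg]
  have hR20 : R2 ≠ 0 := fun h => by simpa [h] using hR2pos 0
  have hL2 : 0 < R2.leadingCoeff := aux_lc_pos R2 (hR2deg ▸ hm) hR2pos
  have hdegeq2 : R2.degree = T.degree := by
    rw [degree_eq_natDegree hR20, degree_eq_natDegree hT0, hR2deg, hTdeg]
  have htop2 : Filter.Tendsto (fun x => R2.eval x / T.eval x) Filter.atTop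
      (nhds (R2.leadingCoeff / T.leadingCoeff)) :=
    div_tendsto_leadingCoeff_div_of_degree_eq R2 T hdegeq2
  rw [hTlc, div_one] at htop2
  obtain ⟨M2, hM2⟩ := (htop2.eventually (lt_mem_nhds (half_lt_self hL2))).exists_forall_of_atTop
  set M : ℝ := max (max M1 M2) 0 with hM
  have hMnn : (0:ℝ) ≤ M := le_max_right _ _
  have hcont : Continuous h := R.continuous.div T.continuous fun x => (hTpos x).ne'
  obtain ⟨x0, hx0K, hmin⟩ := isCompact_Icc.exists_isMinOn
    (Set.nonempty_Icc.mpr (neg_le_self hMnn)) hcont.continuousOn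
  have hx0pos : 0 < h x0 := div_pos (hpos x0) (hTpos x0)
  refine ⟨min (min (R.leadingCoeff / 2) (R2.leadingCoeff / 2)) (h x0),
    lt_min (lt_min (half_pos hL1) (half_pos hL2)) hx0pos, fun x => ?_⟩
  have key : min (min (R.leadingCoeff / 2) (R2.leadingCoeff / 2)) (h x0) ≤ h x := by
    rcases le_or_gt x M with hxM | hxM
    · rcases le_or_gt (-M) x with hxM' | hxM'
      · exact le_trans (min_le_right _ _) (hmin ⟨hxM', hxM⟩)
      · have hx2 : M2 ≤ -x := by
          have : M2 ≤ M := le_trans (le_max_right _ _) (le_max_left _ _)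
          linarith
        have h2 := hM2 (-x) hx2
        have heq : R2.eval (-x) / T.eval (-x) = h x := by
          rw [hR2eval, neg_neg, hh]
          congr 1
          rw [hTeval, hTeval, abs_neg]
        rw [heq] at h2
        exact le_trans (le_trans (min_le_left _ _) (min_le_right _ _)) h2.le
    · have hx1 : M1 ≤ x := by
        have : M1 ≤ M := le_trans (le_max_left _ _) (le_max_left _ _)
        linarith
      exact le_trans (le_trans (min_le_left _ _) (min_le_left _ _)) (hM1 x hx1).le
  calc min (min (R.leadingCoeff / 2) (R2.leadingCoeff / 2)) (h x0) * (1 + |x| ^ m)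
      ≤ h x * (1 + |x| ^ m) := mul_le_mul_of_nonneg_right key (by positivity)
    _ = R.eval x := by
        rw [hh]
        field_simp [← hTeval x, (hTpos x).ne']
        rw [hTeval]

/-- The dual functional `J(P,Q)` of the Kullback–Leibler moment-matching problem. -/
noncomputable def dualJ (n : ℕ) (σ ξ : ℕ → ℝ) (θ : ℝ → ℝ) (P Q : Polynomial ℝ) : ℝ :=
  (∑ k ∈ Finset.range (2 * n + 1), σ k * Q.coeff k)
    - (∑ k ∈ Finset.Icc 1 (2 * n), ξ k * P.coeff k)
    + (∫ x : ℝ, P.eval x * θ x * Real.log (P.eval x * θ x / Q.eval x))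
    - ∫ x : ℝ, P.eval x * θ x

set_option maxHeartbeats 2000000 in
/-- Partial derivatives of the dual functional `J` with respect to the coefficients of the
positive polynomials `P` and `Q`: perturbing `P` in the direction `x^k` (k = 1,…,2n) gives
derivative `−ξ_k + ∫ x^k θ log(Pθ/Q)`, and perturbing `Q` in the direction `x^k`
(k = 0,…,2n) gives derivative `σ_k − ∫ x^k Pθ/Q`. -/
theorem dualJ_directional_derivatives
    (n : ℕ) (hn : 1 ≤ n)
    (σ ξ : ℕ → ℝ) (hσ0 : σ 0 = 1)
    (θ : ℝ → ℝ) (hθmeas : Measurable θ) (hθpos : ∀ x, 0 < θ x)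
    (hθint : Integrable (fun x : ℝ =>
      (1 + |x| ^ (2 * n)) * θ x * (1 + |Real.log (θ x)| + Real.log (1 + |x|))))
    (P Q : Polynomial ℝ)
    (hP0 : P.coeff 0 = 1)
    (hPdeg : P.natDegree = 2 * n) (hQdeg : Q.natDegree = 2 * n)
    (hPpos : ∀ x : ℝ, 0 < P.eval x) (hQpos : ∀ x : ℝ, 0 < Q.eval x) :
    (∀ k ∈ Finset.Icc 1 (2 * n), ∃ δ > (0 : ℝ),
      (∀ ε : ℝ, |ε| < δ →
        (∀ x : ℝ, 0 < (P + Polynomial.C ε * Polynomial.X ^ k).eval x) ∧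
        Integrable (fun x : ℝ => (P + Polynomial.C ε * Polynomial.X ^ k).eval x * θ x *
          Real.log ((P + Polynomial.C ε * Polynomial.X ^ k).eval x * θ x / Q.eval x)) ∧
        Integrable (fun x : ℝ => (P + Polynomial.C ε * Polynomial.X ^ k).eval x * θ x)) ∧
      HasDerivAt (fun ε : ℝ => dualJ n σ ξ θ (P + Polynomial.C ε * Polynomial.X ^ k) Q)
        (-ξ k + ∫ x : ℝ, x ^ k * θ x * Real.log (P.eval x * θ x / Q.eval x)) 0) ∧
    (∀ k ∈ Finset.range (2 * n + 1), ∃ δ > (0 : ℝ),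
      (∀ ε : ℝ, |ε| < δ →
        (∀ x : ℝ, 0 < (Q + Polynomial.C ε * Polynomial.X ^ k).eval x) ∧
        Integrable (fun x : ℝ => P.eval x * θ x *
          Real.log (P.eval x * θ x / (Q + Polynomial.C ε * Polynomial.X ^ k).eval x)) ∧
        Integrable (fun x : ℝ => P.eval x * θ x)) ∧
      HasDerivAt (fun ε : ℝ => dualJ n σ ξ θ P (Q + Polynomial.C ε * Polynomial.X ^ k))
        (σ k - ∫ x : ℝ, x ^ k * (P.eval x * θ x / Q.eval x)) 0) := by
  obtain ⟨cP, hcP0, hcP⟩ := aux_lower (2*n) (by omega) (even_two_mul n) P hPdeg hPpos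
  obtain ⟨cQ, hcQ0, hcQ⟩ := aux_lower (2*n) (by omega) (even_two_mul n) Q hQdeg hQpos
  obtain ⟨CP, hCP0, hCP⟩ := aux_upper (2*n) P hPdeg.le
  obtain ⟨CQ, hCQ0, hCQ⟩ := aux_upper (2*n) Q hQdeg.le
  have hCP' : ∀ x : ℝ, P.eval x ≤ CP * (1 + |x| ^ (2*n)) := fun x => (le_abs_self _).trans (hCP x)
  have hCQ' : ∀ x : ℝ, Q.eval x ≤ CQ * (1 + |x| ^ (2*n)) := fun x => (le_abs_self _).trans (hCQ x)
  have hlog1 : ∀ x : ℝ, 0 ≤ Real.log (1 + |x|) := fun x =>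
    Real.log_nonneg (by linarith [abs_nonneg x])
  have hlog2 : (0:ℝ) ≤ Real.log 2 := Real.log_nonneg one_le_two
  -- generic log bound for the polynomials
  have hlogbd : ∀ (c C : ℝ) (R : Polynomial ℝ), 0 < c → 0 < C →
      (∀ x, c * (1 + |x| ^ (2*n)) ≤ R.eval x) → (∀ x, R.eval x ≤ C * (1 + |x| ^ (2*n))) →
      ∀ x : ℝ, |Real.log (R.eval x)|
        ≤ (|Real.log c| + |Real.log C|) + (2*n : ℝ) * Real.log (1 + |x|) := by
    intro c C R hc hC hlow hup x
    have hxm : (0:ℝ) ≤ |x| ^ (2*n) := pow_nonneg (abs_nonneg x) _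
    have hS : (0:ℝ) < 1 + |x| ^ (2*n) := by linarith
    have hRpos : 0 < R.eval x := lt_of_lt_of_le (by positivity) (hlow x)
    have hpow : 1 + |x| ^ (2*n) ≤ (1 + |x|) ^ (2*n) := by
      have h := pow_add_pow_le zero_le_one (abs_nonneg x) (by omega : 2*n ≠ 0)
      simpa using h
    have hup2 : Real.log (R.eval x) ≤ Real.log C + (2*n : ℝ) * Real.log (1 + |x|) := by
      calc Real.log (R.eval x) ≤ Real.log (C * (1 + |x| ^ (2*n))) :=
            Real.log_le_log hRpos (hup x)
        _ = Real.log C + Real.log (1 + |x| ^ (2*n)) := Real.log_mul hC.ne' hS.ne'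
        _ ≤ Real.log C + Real.log ((1 + |x|) ^ (2*n)) := by
            linarith [Real.log_le_log hS hpow]
        _ = Real.log C + (2*n : ℝ) * Real.log (1 + |x|) := by
            rw [Real.log_pow]; norm_num
    have hlow2 : Real.log c ≤ Real.log (R.eval x) := by
      have h0 : (0:ℝ) ≤ Real.log (1 + |x| ^ (2*n)) := Real.log_nonneg (by linarith)
      calc Real.log c ≤ Real.log c + Real.log (1 + |x| ^ (2*n)) := by linarith
        _ = Real.log (c * (1 + |x| ^ (2*n))) := (Real.log_mul hc.ne' hS.ne').symm
        _ ≤ Real.log (R.eval x) := Real.log_le_log (by positivity) (hlow x)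
    have hmn : (0:ℝ) ≤ (2*n : ℝ) * Real.log (1 + |x|) :=
      mul_nonneg (by positivity) (hlog1 x)
    rw [abs_le]
    constructor
    · have := neg_abs_le (Real.log c)
      have := abs_nonneg (Real.log C)
      linarith
    · have := le_abs_self (Real.log C)
      have := abs_nonneg (Real.log c)
      linarith
  have hlogP := hlogbd cP CP P hcP0 hCP0 hcP hCP'
  have hlogQ := hlogbd cQ CQ Q hcQ0 hCQ0 hcQ hCQ'
  have hsplitlog : ∀ a b c : ℝ, a ≠ 0 → b ≠ 0 → c ≠ 0 →
      |Real.log (a * b / c)| ≤ |Real.log a| + |Real.log b| + |Real.log c| := by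
    intro a b c ha hb hc
    rw [Real.log_div (mul_ne_zero ha hb) hc, Real.log_mul ha hb]
    calc |Real.log a + Real.log b - Real.log c|
        ≤ |Real.log a + Real.log b| + |Real.log c| := abs_sub _ _
      _ ≤ |Real.log a| + |Real.log b| + |Real.log c| := by
          linarith [abs_add_le (Real.log a) (Real.log b)]
  have hDnn : ∀ x : ℝ, 0 ≤ (1 + |x| ^ (2*n)) * θ x *
      (1 + |Real.log (θ x)| + Real.log (1 + |x|)) := fun x =>
    mul_nonneg (mul_nonneg (by positivity) (hθpos x).le)
      (by linarith [hlog1 x, abs_nonneg (Real.log (θ x))])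
  have hbrle : ∀ (A K1 K2 : ℝ), 0 ≤ A → 0 ≤ K1 → 0 ≤ K2 → ∀ (x v : ℝ),
      |v| ≤ A * ((1 + |x| ^ (2*n)) * θ x) * (K1 + K2 * Real.log (1 + |x|) + |Real.log (θ x)|) →
      |v| ≤ (A * (K1 + K2 + 1)) *
        ((1 + |x| ^ (2*n)) * θ x * (1 + |Real.log (θ x)| + Real.log (1 + |x|))) := by
    intro A K1 K2 hA hK1 hK2 x v hv
    refine hv.trans ?_
    have hS : (0:ℝ) ≤ (1 + |x| ^ (2*n)) * θ x := mul_nonneg (by positivity) (hθpos x).le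
    have hl := hlog1 x
    have ht : (0:ℝ) ≤ |Real.log (θ x)| := abs_nonneg _
    have hbr : K1 + K2 * Real.log (1 + |x|) + |Real.log (θ x)|
        ≤ (K1 + K2 + 1) * (1 + |Real.log (θ x)| + Real.log (1 + |x|)) := by
      nlinarith [mul_nonneg hK1 hl, mul_nonneg hK1 ht, mul_nonneg hK2 ht]
    calc A * ((1 + |x| ^ (2*n)) * θ x) *
          (K1 + K2 * Real.log (1 + |x|) + |Real.log (θ x)|)
        ≤ A * ((1 + |x| ^ (2*n)) * θ x) *
          ((K1 + K2 + 1) * (1 + |Real.log (θ x)| + Real.log (1 + |x|))) :=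
          mul_le_mul_of_nonneg_left hbr (mul_nonneg hA hS)
      _ = (A * (K1 + K2 + 1)) *
          ((1 + |x| ^ (2*n)) * θ x * (1 + |Real.log (θ x)| + Real.log (1 + |x|))) := by ring
  have hIntBound : ∀ (f : ℝ → ℝ) (A K1 K2 : ℝ), 0 ≤ A → 0 ≤ K1 → 0 ≤ K2 → Measurable f →
      (∀ x, |f x| ≤ A * ((1 + |x| ^ (2*n)) * θ x) *
        (K1 + K2 * Real.log (1 + |x|) + |Real.log (θ x)|)) →
      Integrable f := by
    intro f A K1 K2 hA hK1 hK2 hf hb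
    refine (hθint.const_mul (A * (K1 + K2 + 1))).mono hf.aestronglyMeasurable
      (Filter.Eventually.of_forall fun x => ?_)
    rw [Real.norm_eq_abs, Real.norm_eq_abs,
      abs_of_nonneg (mul_nonneg (mul_nonneg hA (by linarith)) (hDnn x))]
    exact hbrle A K1 K2 hA hK1 hK2 x (f x) (hb x)
  have mP : Measurable fun x : ℝ => P.eval x := P.continuous.measurable
  have mQ : Measurable fun x : ℝ => Q.eval x := Q.continuous.measurable
  have hPθint : Integrable (fun x : ℝ => P.eval x * θ x) := by
    refine hIntBound _ CP 1 0 hCP0.le zero_le_one le_rfl (mP.mul hθmeas) fun x => ?_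
    have hθ := (hθpos x).le
    have h1 : |P.eval x * θ x| = P.eval x * θ x := abs_of_nonneg (mul_nonneg (hPpos x).le hθ)
    have h2 : P.eval x * θ x ≤ CP * ((1 + |x| ^ (2*n)) * θ x) := by
      have := mul_le_mul_of_nonneg_right (hCP' x) hθ
      linarith [this]
    have h3 : (1:ℝ) ≤ 1 + 0 * Real.log (1 + |x|) + |Real.log (θ x)| := by
      have := abs_nonneg (Real.log (θ x)); linarith
    have hS : (0:ℝ) ≤ CP * ((1 + |x| ^ (2*n)) * θ x) :=
      mul_nonneg hCP0.le (mul_nonneg (by positivity) hθ)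
    calc |P.eval x * θ x| = P.eval x * θ x := h1
      _ ≤ CP * ((1 + |x| ^ (2*n)) * θ x) := h2
      _ ≤ CP * ((1 + |x| ^ (2*n)) * θ x) *
          (1 + 0 * Real.log (1 + |x|) + |Real.log (θ x)|) := le_mul_of_one_le_right hS h3
  constructor
  have hxkθint : ∀ k ≤ 2*n, Integrable (fun x : ℝ => x ^ k * θ x) := by
    intro k hk
    refine hIntBound _ 1 1 0 zero_le_one zero_le_one le_rfl
      ((measurable_id.pow_const k).mul hθmeas) fun x => ?_
    have hθ := (hθpos x).le
    have h1 : |x ^ k * θ x| ≤ (1 + |x| ^ (2*n)) * θ x := by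
      rw [abs_mul, abs_of_nonneg hθ, abs_pow]
      exact mul_le_mul_of_nonneg_right (aux_pow_le (2*n) k hk x) hθ
    have h3 : (1:ℝ) ≤ 1 + 0 * Real.log (1 + |x|) + |Real.log (θ x)| := by
      have := abs_nonneg (Real.log (θ x)); linarith
    have hS : (0:ℝ) ≤ (1 + |x| ^ (2*n)) * θ x := mul_nonneg (by positivity) hθ
    calc |x ^ k * θ x| ≤ (1 + |x| ^ (2*n)) * θ x := h1
      _ ≤ ((1 + |x| ^ (2*n)) * θ x) * (1 + 0 * Real.log (1 + |x|) + |Real.log (θ x)|) :=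
          le_mul_of_one_le_right hS h3
      _ = 1 * ((1 + |x| ^ (2*n)) * θ x) * (1 + 0 * Real.log (1 + |x|) + |Real.log (θ x)|) := by
          ring
  intro k hk
  obtain ⟨hk1, hk2⟩ := Finset.mem_Icc.mp hk
  have hδ : (0:ℝ) < cP/2 := by linarith
  have hxk : ∀ x : ℝ, |x ^ k| ≤ 1 + |x| ^ (2*n) := fun x => by
    rw [abs_pow]; exact aux_pow_le (2*n) k hk2 x
  have hsand : ∀ ε : ℝ, |ε| ≤ cP/2 → ∀ x : ℝ,
      P.eval x / 2 ≤ P.eval x + ε * x ^ k ∧ P.eval x + ε * x ^ k ≤ 3/2 * P.eval x := by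
    intro ε hε x
    have h2 : |ε * x ^ k| ≤ P.eval x / 2 := by
      rw [abs_mul]
      calc |ε| * |x ^ k| ≤ (cP/2) * (1 + |x| ^ (2*n)) :=
          mul_le_mul hε (hxk x) (abs_nonneg _) (by linarith)
        _ ≤ P.eval x / 2 := by linarith [hcP x]
    obtain ⟨h3, h4⟩ := abs_le.mp h2
    constructor <;> linarith
  have hposε : ∀ ε : ℝ, |ε| ≤ cP/2 → ∀ x, 0 < P.eval x + ε * x ^ k :=
    fun ε hε x => lt_of_lt_of_le (by linarith [hPpos x]) (hsand ε hε x).1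
  have hlogy : ∀ ε : ℝ, |ε| ≤ cP/2 → ∀ x,
      |Real.log (P.eval x + ε * x ^ k)| ≤ |Real.log (P.eval x)| + Real.log 2 := by
    intro ε hε x
    obtain ⟨h3, h4⟩ := hsand ε hε x
    have hp := hPpos x
    have hy := hposε ε hε x
    have hu : Real.log (P.eval x + ε * x ^ k) ≤ Real.log 2 + Real.log (P.eval x) := by
      calc Real.log (P.eval x + ε * x ^ k) ≤ Real.log (2 * P.eval x) :=
          Real.log_le_log hy (by linarith)
        _ = Real.log 2 + Real.log (P.eval x) := Real.log_mul two_ne_zero hp.ne'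
    have hl : Real.log (P.eval x) - Real.log 2 ≤ Real.log (P.eval x + ε * x ^ k) := by
      have h := Real.log_le_log (by linarith : (0:ℝ) < P.eval x / 2) h3
      rwa [Real.log_div hp.ne' two_ne_zero] at h
    rw [abs_le]
    constructor
    · linarith [neg_abs_le (Real.log (P.eval x))]
    · linarith [le_abs_self (Real.log (P.eval x))]
  have hlogu : ∀ ε : ℝ, |ε| ≤ cP/2 → ∀ x,
      |Real.log ((P.eval x + ε * x ^ k) * θ x / Q.eval x)|
        ≤ ((|Real.log cP| + |Real.log CP|) + (|Real.log cQ| + |Real.log CQ|) + Real.log 2)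
          + (2*(2*n : ℝ)) * Real.log (1 + |x|) + |Real.log (θ x)| := by
    intro ε hε x
    have h := hsplitlog _ _ _ (hposε ε hε x).ne' (hθpos x).ne' (hQpos x).ne'
    have h1 := hlogy ε hε x
    have h2 := hlogP x
    have h3 := hlogQ x
    linarith
  have hFb : ∀ ε : ℝ, |ε| ≤ cP/2 → ∀ x,
      |(P.eval x + ε * x ^ k) * θ x * Real.log ((P.eval x + ε * x ^ k) * θ x / Q.eval x)|
        ≤ ((3/2)*CP) * ((1 + |x| ^ (2*n)) * θ x) *
          (((|Real.log cP| + |Real.log CP|) + (|Real.log cQ| + |Real.log CQ|) + Real.log 2)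
            + (2*(2*n : ℝ)) * Real.log (1 + |x|) + |Real.log (θ x)|) := by
    intro ε hε x
    rw [abs_mul]
    have hθ := (hθpos x).le
    refine mul_le_mul ?_ (hlogu ε hε x) (abs_nonneg _) ?_
    · rw [abs_mul, abs_of_nonneg (hposε ε hε x).le, abs_of_nonneg hθ]
      have hb1 := mul_le_mul_of_nonneg_right (hsand ε hε x).2 hθ
      have hb2 := mul_le_mul_of_nonneg_right (hCP' x) hθ
      nlinarith
    · exact mul_nonneg (by positivity) (mul_nonneg (by positivity) hθ)
  have hF'b : ∀ ε : ℝ, |ε| ≤ cP/2 → ∀ x,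
      |x ^ k * θ x * Real.log ((P.eval x + ε * x ^ k) * θ x / Q.eval x) + x ^ k * θ x|
        ≤ 1 * ((1 + |x| ^ (2*n)) * θ x) *
          (((|Real.log cP| + |Real.log CP|) + (|Real.log cQ| + |Real.log CQ|) + Real.log 2 + 1)
            + (2*(2*n : ℝ)) * Real.log (1 + |x|) + |Real.log (θ x)|) := by
    intro ε hε x
    have hθ := (hθpos x).le
    have hS : |x ^ k * θ x| ≤ (1 + |x| ^ (2*n)) * θ x := by
      rw [abs_mul, abs_of_nonneg hθ]
      exact mul_le_mul_of_nonneg_right (hxk x) hθ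
    have h1 : |x ^ k * θ x * Real.log ((P.eval x + ε * x ^ k) * θ x / Q.eval x)|
        ≤ ((1 + |x| ^ (2*n)) * θ x) *
          (((|Real.log cP| + |Real.log CP|) + (|Real.log cQ| + |Real.log CQ|) + Real.log 2)
            + (2*(2*n : ℝ)) * Real.log (1 + |x|) + |Real.log (θ x)|) := by
      rw [abs_mul]
      exact mul_le_mul hS (hlogu ε hε x) (abs_nonneg _) (mul_nonneg (by positivity) hθ)
    calc |x ^ k * θ x * Real.log ((P.eval x + ε * x ^ k) * θ x / Q.eval x) + x ^ k * θ x|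
        ≤ |x ^ k * θ x * Real.log ((P.eval x + ε * x ^ k) * θ x / Q.eval x)| + |x ^ k * θ x| :=
          abs_add_le _ _
      _ ≤ ((1 + |x| ^ (2*n)) * θ x) *
          (((|Real.log cP| + |Real.log CP|) + (|Real.log cQ| + |Real.log CQ|) + Real.log 2)
            + (2*(2*n : ℝ)) * Real.log (1 + |x|) + |Real.log (θ x)|)
          + (1 + |x| ^ (2*n)) * θ x := add_le_add h1 hS
      _ = 1 * ((1 + |x| ^ (2*n)) * θ x) *
          (((|Real.log cP| + |Real.log CP|) + (|Real.log cQ| + |Real.log CQ|) + Real.log 2 + 1)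
            + (2*(2*n : ℝ)) * Real.log (1 + |x|) + |Real.log (θ x)|) := by ring
  have mxk : Measurable fun x : ℝ => x ^ k := measurable_id.pow_const k
  have mF : ∀ ε : ℝ, Measurable fun x =>
      (P.eval x + ε * x ^ k) * θ x * Real.log ((P.eval x + ε * x ^ k) * θ x / Q.eval x) := by
    intro ε
    have h1 : Measurable fun x : ℝ => (P.eval x + ε * x ^ k) * θ x :=
      (mP.add (mxk.const_mul ε)).mul hθmeas
    exact h1.mul ((h1.div mQ).log)
  have mF' : ∀ ε : ℝ, Measurable fun x : ℝ =>
      x ^ k * θ x * Real.log ((P.eval x + ε * x ^ k) * θ x / Q.eval x) + x ^ k * θ x := by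
    intro ε
    have h1 : Measurable fun x : ℝ => (P.eval x + ε * x ^ k) * θ x :=
      (mP.add (mxk.const_mul ε)).mul hθmeas
    exact ((mxk.mul hθmeas).mul ((h1.div mQ).log)).add (mxk.mul hθmeas)
  have hKnn : (0:ℝ) ≤ (|Real.log cP| + |Real.log CP|) + (|Real.log cQ| + |Real.log CQ|)
      + Real.log 2 := by positivity
  have hFint : ∀ ε : ℝ, |ε| ≤ cP/2 → Integrable (fun x =>
      (P.eval x + ε * x ^ k) * θ x * Real.log ((P.eval x + ε * x ^ k) * θ x / Q.eval x)) :=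
    fun ε hε => hIntBound _ ((3/2)*CP)
      ((|Real.log cP| + |Real.log CP|) + (|Real.log cQ| + |Real.log CQ|) + Real.log 2)
      (2*(2*n : ℝ)) (by positivity) hKnn (by positivity) (mF ε) (hFb ε hε)
  have hGint : ∀ ε : ℝ, Integrable (fun x => (P.eval x + ε * x ^ k) * θ x) := by
    intro ε
    have h : (fun x : ℝ => (P.eval x + ε * x ^ k) * θ x)
        = fun x => P.eval x * θ x + ε * (x ^ k * θ x) := by funext x; ring
    rw [h]
    exact hPθint.add ((hxkθint k hk2).const_mul ε)
  have hlogint : Integrable (fun x : ℝ => x ^ k * θ x * Real.log (P.eval x * θ x / Q.eval x)) := by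
    refine hIntBound _ 1
      ((|Real.log cP| + |Real.log CP|) + (|Real.log cQ| + |Real.log CQ|))
      (2*(2*n : ℝ)) zero_le_one (by positivity) (by positivity)
      ((mxk.mul hθmeas).mul (((mP.mul hθmeas).div mQ).log)) fun x => ?_
    have hθ := (hθpos x).le
    have hS : |x ^ k * θ x| ≤ (1 + |x| ^ (2*n)) * θ x := by
      rw [abs_mul, abs_of_nonneg hθ]
      exact mul_le_mul_of_nonneg_right (hxk x) hθ
    have hlg : |Real.log (P.eval x * θ x / Q.eval x)|
        ≤ ((|Real.log cP| + |Real.log CP|) + (|Real.log cQ| + |Real.log CQ|))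
          + (2*(2*n : ℝ)) * Real.log (1 + |x|) + |Real.log (θ x)| := by
      have h := hsplitlog _ _ _ (hPpos x).ne' (hθpos x).ne' (hQpos x).ne'
      linarith [hlogP x, hlogQ x]
    rw [abs_mul]
    calc |x ^ k * θ x| * |Real.log (P.eval x * θ x / Q.eval x)|
        ≤ ((1 + |x| ^ (2*n)) * θ x) *
          (((|Real.log cP| + |Real.log CP|) + (|Real.log cQ| + |Real.log CQ|))
            + (2*(2*n : ℝ)) * Real.log (1 + |x|) + |Real.log (θ x)|) :=
          mul_le_mul hS hlg (abs_nonneg _) (mul_nonneg (by positivity) hθ)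
      _ = 1 * ((1 + |x| ^ (2*n)) * θ x) *
          (((|Real.log cP| + |Real.log CP|) + (|Real.log cQ| + |Real.log CQ|))
            + (2*(2*n : ℝ)) * Real.log (1 + |x|) + |Real.log (θ x)|) := by ring
  have key := hasDerivAt_integral_of_dominated_loc_of_deriv_le (μ := volume) (x₀ := (0:ℝ))
    (F := fun ε x =>
      (P.eval x + ε * x ^ k) * θ x * Real.log ((P.eval x + ε * x ^ k) * θ x / Q.eval x))
    (F' := fun ε x =>
      x ^ k * θ x * Real.log ((P.eval x + ε * x ^ k) * θ x / Q.eval x) + x ^ k * θ x)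
    (bound := fun x => (1 * ((((|Real.log cP| + |Real.log CP|) + (|Real.log cQ| + |Real.log CQ|)
        + Real.log 2 + 1)) + (2*(2*n : ℝ)) + 1)) *
        ((1 + |x| ^ (2*n)) * θ x * (1 + |Real.log (θ x)| + Real.log (1 + |x|))))
    (Metric.ball_mem_nhds 0 hδ)
    (Filter.Eventually.of_forall fun ε => (mF ε).aestronglyMeasurable)
    (hFint 0 (by simpa using hδ.le))
    (mF' 0).aestronglyMeasurable
    (Filter.Eventually.of_forall fun x => fun ε hε => by
      have hε' : |ε| ≤ cP/2 := by
        rw [Metric.mem_ball, Real.dist_eq, sub_zero] at hε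
        exact hε.le
      rw [Real.norm_eq_abs]
      exact hbrle 1 _ _ zero_le_one (by linarith [hKnn]) (by positivity) x _ (hF'b ε hε' x))
    (hθint.const_mul _)
    (Filter.Eventually.of_forall fun x => fun ε hε => by
      have hε' : |ε| ≤ cP/2 := by
        rw [Metric.mem_ball, Real.dist_eq, sub_zero] at hε
        exact hε.le
      have hy := hposε ε hε' x
      have hθ := hθpos x
      have hq := hQpos x
      have hu : HasDerivAt (fun e : ℝ => (P.eval x + e * x ^ k) * θ x) (x ^ k * θ x) ε := by
        simpa using (((hasDerivAt_id ε).mul_const (x ^ k)).const_add (P.eval x)).mul_const (θ x)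
      have hne : (P.eval x + ε * x ^ k) * θ x / Q.eval x ≠ 0 :=
        (div_pos (mul_pos hy hθ) hq).ne'
      have hmul := hu.mul ((hu.div_const (Q.eval x)).log hne)
      refine hmul.congr_deriv ?_
      field_simp
      rw [div_self (by rw [mul_comm]; exact hy.ne' : P.eval x + x ^ k * ε ≠ 0)])
  have hF'0 : (fun x : ℝ =>
        x ^ k * θ x * Real.log ((P.eval x + 0 * x ^ k) * θ x / Q.eval x) + x ^ k * θ x)
      = fun x : ℝ => x ^ k * θ x * Real.log (P.eval x * θ x / Q.eval x) + x ^ k * θ x := by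
    funext x; norm_num
  have hI0 : (∫ x : ℝ, (x ^ k * θ x * Real.log ((P.eval x + 0 * x ^ k) * θ x / Q.eval x)
        + x ^ k * θ x))
      = (∫ x : ℝ, x ^ k * θ x * Real.log (P.eval x * θ x / Q.eval x))
        + ∫ x : ℝ, x ^ k * θ x := by
    rw [hF'0, integral_add hlogint (hxkθint k hk2)]
  have hfun : (fun ε : ℝ => dualJ n σ ξ θ (P + Polynomial.C ε * Polynomial.X ^ k) Q)
      = fun ε : ℝ => (∑ j ∈ Finset.range (2*n+1), σ j * Q.coeff j)
          - (∑ j ∈ Finset.Icc 1 (2*n), ξ j * (P.coeff j + ε * (if j = k then 1 else 0)))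
          + (∫ x : ℝ,
            (P.eval x + ε * x ^ k) * θ x * Real.log ((P.eval x + ε * x ^ k) * θ x / Q.eval x))
          - ((∫ x : ℝ, P.eval x * θ x) + ε * ∫ x : ℝ, x ^ k * θ x) := by
    funext ε
    unfold dualJ
    congr 1
    · congr 1
      · congr 1
        refine Finset.sum_congr rfl fun j hj => ?_
        simp [coeff_add, coeff_C_mul, coeff_X_pow]
      · congr 1
        funext x
        simp [eval_add, eval_mul, eval_C, eval_pow, eval_X]
    · have h1 : (fun x : ℝ => (P + Polynomial.C ε * Polynomial.X ^ k).eval x * θ x)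
          = fun x : ℝ => P.eval x * θ x + ε * (x ^ k * θ x) := by
        funext x
        simp only [eval_add, eval_mul, eval_C, eval_pow, eval_X]
        ring
      rw [h1, integral_add hPθint ((hxkθint k hk2).const_mul ε), integral_const_mul]
  have hS2 : HasDerivAt (fun ε : ℝ =>
      ∑ j ∈ Finset.Icc 1 (2*n), ξ j * (P.coeff j + ε * (if j = k then 1 else 0))) (ξ k) 0 := by
    have h : ∀ j ∈ Finset.Icc 1 (2*n), HasDerivAt
        (fun ε : ℝ => ξ j * (P.coeff j + ε * (if j = k then 1 else 0)))
        (ξ j * (if j = k then 1 else 0)) 0 := by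
      intro j hj
      simpa using (HasDerivAt.const_mul (ξ j)
        (((hasDerivAt_id (0:ℝ)).mul_const (if j = k then (1:ℝ) else 0)).const_add (P.coeff j)))
    have h2 := HasDerivAt.fun_sum h
    have h3 : (∑ j ∈ Finset.Icc 1 (2*n), ξ j * (if j = k then (1:ℝ) else 0)) = ξ k := by
      rw [Finset.sum_congr rfl fun j _ => by rw [mul_ite, mul_one, mul_zero]]
      rw [Finset.sum_ite_eq' (Finset.Icc 1 (2*n)) k ξ, if_pos hk]
    rwa [h3] at h2
  have hM : HasDerivAt (fun ε : ℝ =>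
      (∫ x : ℝ, P.eval x * θ x) + ε * ∫ x : ℝ, x ^ k * θ x) (∫ x : ℝ, x ^ k * θ x) 0 := by
    simpa using ((hasDerivAt_id (0:ℝ)).mul_const (∫ x : ℝ, x ^ k * θ x)).const_add
      (∫ x : ℝ, P.eval x * θ x)
  refine ⟨cP/2, hδ, ?_, ?_⟩
  · intro ε hε
    have hε' : |ε| ≤ cP/2 := hε.le
    refine ⟨?_, ?_, ?_⟩
    · intro x
      have := hposε ε hε' x
      simpa [eval_add, eval_mul, eval_C, eval_pow, eval_X] using this
    · have h := hFint ε hε'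
      simpa only [eval_add, eval_mul, eval_C, eval_pow, eval_X] using h
    · have h := hGint ε
      simpa only [eval_add, eval_mul, eval_C, eval_pow, eval_X] using h
  · rw [hfun]
    have htot := (((hasDerivAt_const (0:ℝ)
        (∑ j ∈ Finset.range (2*n+1), σ j * Q.coeff j)).sub hS2).add key.2).sub hM
    refine htot.congr_deriv ?_
    rw [hI0]
    ring
  intro k hk
  have hk2 : k ≤ 2*n := Nat.lt_succ_iff.mp (Finset.mem_range.mp hk)
  have hδ : (0:ℝ) < cQ/2 := by linarith
  have hxk : ∀ x : ℝ, |x ^ k| ≤ 1 + |x| ^ (2*n) := fun x => by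
    rw [abs_pow]; exact aux_pow_le (2*n) k hk2 x
  have hsand : ∀ ε : ℝ, |ε| ≤ cQ/2 → ∀ x : ℝ,
      Q.eval x / 2 ≤ Q.eval x + ε * x ^ k ∧ Q.eval x + ε * x ^ k ≤ 3/2 * Q.eval x := by
    intro ε hε x
    have h2 : |ε * x ^ k| ≤ Q.eval x / 2 := by
      rw [abs_mul]
      calc |ε| * |x ^ k| ≤ (cQ/2) * (1 + |x| ^ (2*n)) :=
          mul_le_mul hε (hxk x) (abs_nonneg _) (by linarith)
        _ ≤ Q.eval x / 2 := by linarith [hcQ x]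
    obtain ⟨h3, h4⟩ := abs_le.mp h2
    constructor <;> linarith
  have hposε : ∀ ε : ℝ, |ε| ≤ cQ/2 → ∀ x, 0 < Q.eval x + ε * x ^ k :=
    fun ε hε x => lt_of_lt_of_le (by linarith [hQpos x]) (hsand ε hε x).1
  have hlogy : ∀ ε : ℝ, |ε| ≤ cQ/2 → ∀ x,
      |Real.log (Q.eval x + ε * x ^ k)| ≤ |Real.log (Q.eval x)| + Real.log 2 := by
    intro ε hε x
    obtain ⟨h3, h4⟩ := hsand ε hε x
    have hp := hQpos x
    have hy := hposε ε hε x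
    have hu : Real.log (Q.eval x + ε * x ^ k) ≤ Real.log 2 + Real.log (Q.eval x) := by
      calc Real.log (Q.eval x + ε * x ^ k) ≤ Real.log (2 * Q.eval x) :=
          Real.log_le_log hy (by linarith)
        _ = Real.log 2 + Real.log (Q.eval x) := Real.log_mul two_ne_zero hp.ne'
    have hl : Real.log (Q.eval x) - Real.log 2 ≤ Real.log (Q.eval x + ε * x ^ k) := by
      have h := Real.log_le_log (by linarith : (0:ℝ) < Q.eval x / 2) h3
      rwa [Real.log_div hp.ne' two_ne_zero] at h
    rw [abs_le]
    constructor
    · linarith [neg_abs_le (Real.log (Q.eval x))]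
    · linarith [le_abs_self (Real.log (Q.eval x))]
  have hlogu : ∀ ε : ℝ, |ε| ≤ cQ/2 → ∀ x,
      |Real.log (P.eval x * θ x / (Q.eval x + ε * x ^ k))|
        ≤ ((|Real.log cP| + |Real.log CP|) + (|Real.log cQ| + |Real.log CQ|) + Real.log 2)
          + (2*(2*n : ℝ)) * Real.log (1 + |x|) + |Real.log (θ x)| := by
    intro ε hε x
    have h := hsplitlog _ _ _ (hPpos x).ne' (hθpos x).ne' (hposε ε hε x).ne'
    have h1 := hlogy ε hε x
    have h2 := hlogP x
    have h3 := hlogQ x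
    linarith
  have hPθb : ∀ x : ℝ, |P.eval x * θ x| ≤ CP * ((1 + |x| ^ (2*n)) * θ x) := by
    intro x
    have hθ := (hθpos x).le
    rw [abs_of_nonneg (mul_nonneg (hPpos x).le hθ)]
    have := mul_le_mul_of_nonneg_right (hCP' x) hθ
    linarith
  have hFb : ∀ ε : ℝ, |ε| ≤ cQ/2 → ∀ x,
      |P.eval x * θ x * Real.log (P.eval x * θ x / (Q.eval x + ε * x ^ k))|
        ≤ CP * ((1 + |x| ^ (2*n)) * θ x) *
          (((|Real.log cP| + |Real.log CP|) + (|Real.log cQ| + |Real.log CQ|) + Real.log 2)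
            + (2*(2*n : ℝ)) * Real.log (1 + |x|) + |Real.log (θ x)|) := by
    intro ε hε x
    rw [abs_mul]
    have hθ := (hθpos x).le
    exact mul_le_mul (hPθb x) (hlogu ε hε x) (abs_nonneg _)
      (mul_nonneg hCP0.le (mul_nonneg (by positivity) hθ))
  have hF'b : ∀ ε : ℝ, |ε| ≤ cQ/2 → ∀ x,
      |-(P.eval x * θ x * (x ^ k / (Q.eval x + ε * x ^ k)))|
        ≤ (2*CP/cQ) * ((1 + |x| ^ (2*n)) * θ x) *
          (1 + 0 * Real.log (1 + |x|) + |Real.log (θ x)|) := by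
    intro ε hε x
    have hθ := (hθpos x).le
    have hv := hposε ε hε x
    have hdiv : |x ^ k| / (Q.eval x + ε * x ^ k) ≤ 2 / cQ := by
      rw [div_le_div_iff₀ hv hcQ0]
      have hb1 := mul_le_mul_of_nonneg_right (hxk x) hcQ0.le
      have hb2 := hcQ x
      have hb3 := (hsand ε hε x).1
      nlinarith
    have h1 : |-(P.eval x * θ x * (x ^ k / (Q.eval x + ε * x ^ k)))|
        = |P.eval x * θ x| * (|x ^ k| / (Q.eval x + ε * x ^ k)) := by
      rw [abs_neg, abs_mul, abs_div, abs_of_nonneg hv.le]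
    rw [h1]
    have h2 : |P.eval x * θ x| * (|x ^ k| / (Q.eval x + ε * x ^ k))
        ≤ (CP * ((1 + |x| ^ (2*n)) * θ x)) * (2 / cQ) :=
      mul_le_mul (hPθb x) hdiv (div_nonneg (abs_nonneg _) hv.le)
        (mul_nonneg hCP0.le (mul_nonneg (by positivity) hθ))
    have h3 : (1:ℝ) ≤ 1 + 0 * Real.log (1 + |x|) + |Real.log (θ x)| := by
      have := abs_nonneg (Real.log (θ x)); linarith
    calc |P.eval x * θ x| * (|x ^ k| / (Q.eval x + ε * x ^ k))
        ≤ (CP * ((1 + |x| ^ (2*n)) * θ x)) * (2 / cQ) := h2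
      _ = (2*CP/cQ) * ((1 + |x| ^ (2*n)) * θ x) := by field_simp
      _ ≤ (2*CP/cQ) * ((1 + |x| ^ (2*n)) * θ x) *
          (1 + 0 * Real.log (1 + |x|) + |Real.log (θ x)|) :=
          le_mul_of_one_le_right (mul_nonneg (by positivity)
            (mul_nonneg (by positivity) hθ)) h3
  have mxk : Measurable fun x : ℝ => x ^ k := measurable_id.pow_const k
  have mF : ∀ ε : ℝ, Measurable fun x =>
      P.eval x * θ x * Real.log (P.eval x * θ x / (Q.eval x + ε * x ^ k)) := by
    intro ε
    have h1 : Measurable fun x : ℝ => Q.eval x + ε * x ^ k := mQ.add (mxk.const_mul ε)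
    exact (mP.mul hθmeas).mul (((mP.mul hθmeas).div h1).log)
  have mF' : ∀ ε : ℝ, Measurable fun x : ℝ =>
      -(P.eval x * θ x * (x ^ k / (Q.eval x + ε * x ^ k))) := by
    intro ε
    have h1 : Measurable fun x : ℝ => Q.eval x + ε * x ^ k := mQ.add (mxk.const_mul ε)
    exact ((mP.mul hθmeas).mul (mxk.div h1)).neg
  have hKnn : (0:ℝ) ≤ (|Real.log cP| + |Real.log CP|) + (|Real.log cQ| + |Real.log CQ|)
      + Real.log 2 := by positivity
  have hFint : ∀ ε : ℝ, |ε| ≤ cQ/2 → Integrable (fun x =>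
      P.eval x * θ x * Real.log (P.eval x * θ x / (Q.eval x + ε * x ^ k))) :=
    fun ε hε => hIntBound _ CP
      ((|Real.log cP| + |Real.log CP|) + (|Real.log cQ| + |Real.log CQ|) + Real.log 2)
      (2*(2*n : ℝ)) hCP0.le hKnn (by positivity) (mF ε) (hFb ε hε)
  have key := hasDerivAt_integral_of_dominated_loc_of_deriv_le (μ := volume) (x₀ := (0:ℝ))
    (F := fun ε x => P.eval x * θ x * Real.log (P.eval x * θ x / (Q.eval x + ε * x ^ k)))
    (F' := fun ε x => -(P.eval x * θ x * (x ^ k / (Q.eval x + ε * x ^ k))))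
    (bound := fun x => ((2*CP/cQ) * (1 + 0 + 1)) *
        ((1 + |x| ^ (2*n)) * θ x * (1 + |Real.log (θ x)| + Real.log (1 + |x|))))
    (Metric.ball_mem_nhds 0 hδ)
    (Filter.Eventually.of_forall fun ε => (mF ε).aestronglyMeasurable)
    (hFint 0 (by simpa using hδ.le))
    (mF' 0).aestronglyMeasurable
    (Filter.Eventually.of_forall fun x => fun ε hε => by
      have hε' : |ε| ≤ cQ/2 := by
        rw [Metric.mem_ball, Real.dist_eq, sub_zero] at hε
        exact hε.le
      rw [Real.norm_eq_abs]
      exact hbrle (2*CP/cQ) 1 0 (by positivity) zero_le_one le_rfl x _ (hF'b ε hε' x))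
    (hθint.const_mul _)
    (Filter.Eventually.of_forall fun x => fun ε hε => by
      have hε' : |ε| ≤ cQ/2 := by
        rw [Metric.mem_ball, Real.dist_eq, sub_zero] at hε
        exact hε.le
      have hv := hposε ε hε' x
      have hθ := hθpos x
      have hp := hPpos x
      have hq' : HasDerivAt (fun e : ℝ => Q.eval x + e * x ^ k) (x ^ k) ε := by
        simpa using ((hasDerivAt_id ε).mul_const (x ^ k)).const_add (Q.eval x)
      have hcm := (hq'.inv hv.ne').const_mul (P.eval x * θ x)
      have hne : P.eval x * θ x * (Q.eval x + ε * x ^ k)⁻¹ ≠ 0 :=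
        (mul_pos (mul_pos hp hθ) (inv_pos.mpr hv)).ne'
      have hfin := (hcm.log hne).const_mul (P.eval x * θ x)
      simp only [div_eq_mul_inv]
      refine hfin.congr_deriv ?_
      simp only [Pi.inv_apply]
      have hv0 := hv.ne'
      have hpθ := (mul_pos hp hθ).ne'
      field_simp)
  have hF'0 : (fun x : ℝ => -(P.eval x * θ x * (x ^ k / (Q.eval x + 0 * x ^ k))))
      = fun x : ℝ => -(x ^ k * (P.eval x * θ x / Q.eval x)) := by
    funext x
    rw [zero_mul, add_zero]
    ring
  have hI0 : (∫ x : ℝ, -(P.eval x * θ x * (x ^ k / (Q.eval x + 0 * x ^ k))))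
      = -∫ x : ℝ, x ^ k * (P.eval x * θ x / Q.eval x) := by
    rw [hF'0, integral_neg]
  have hfun : (fun ε : ℝ => dualJ n σ ξ θ P (Q + Polynomial.C ε * Polynomial.X ^ k))
      = fun ε : ℝ => (∑ j ∈ Finset.range (2*n+1), σ j * (Q.coeff j + ε * (if j = k then 1 else 0)))
          - (∑ j ∈ Finset.Icc 1 (2*n), ξ j * P.coeff j)
          + (∫ x : ℝ, P.eval x * θ x * Real.log (P.eval x * θ x / (Q.eval x + ε * x ^ k)))
          - ∫ x : ℝ, P.eval x * θ x := by
    funext ε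
    unfold dualJ
    congr 1
    congr 1
    · congr 1
      refine Finset.sum_congr rfl fun j hj => ?_
      simp [coeff_add, coeff_C_mul, coeff_X_pow]
    · congr 1
      funext x
      simp [eval_add, eval_mul, eval_C, eval_pow, eval_X]
  have hS1 : HasDerivAt (fun ε : ℝ =>
      ∑ j ∈ Finset.range (2*n+1), σ j * (Q.coeff j + ε * (if j = k then 1 else 0))) (σ k) 0 := by
    have h : ∀ j ∈ Finset.range (2*n+1), HasDerivAt
        (fun ε : ℝ => σ j * (Q.coeff j + ε * (if j = k then 1 else 0)))
        (σ j * (if j = k then 1 else 0)) 0 := by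
      intro j hj
      simpa using (HasDerivAt.const_mul (σ j)
        (((hasDerivAt_id (0:ℝ)).mul_const (if j = k then (1:ℝ) else 0)).const_add (Q.coeff j)))
    have h2 := HasDerivAt.fun_sum h
    have h3 : (∑ j ∈ Finset.range (2*n+1), σ j * (if j = k then (1:ℝ) else 0)) = σ k := by
      rw [Finset.sum_congr rfl fun j _ => by rw [mul_ite, mul_one, mul_zero]]
      rw [Finset.sum_ite_eq' (Finset.range (2*n+1)) k σ, if_pos hk]
    rwa [h3] at h2
  refine ⟨cQ/2, hδ, ?_, ?_⟩
  · intro ε hε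
    have hε' : |ε| ≤ cQ/2 := hε.le
    refine ⟨?_, ?_, ?_⟩
    · intro x
      have := hposε ε hε' x
      simpa [eval_add, eval_mul, eval_C, eval_pow, eval_X] using this
    · have h := hFint ε hε'
      simpa only [eval_add, eval_mul, eval_C, eval_pow, eval_X] using h
    · exact hPθint
  · rw [hfun]
    have htot := ((hS1.sub_const (∑ j ∈ Finset.Icc 1 (2*n), ξ j * P.coeff j)).add
      key.2).sub_const (∫ x : ℝ, P.eval x * θ x)
    refine htot.congr_deriv ?_
    rw [hI0]
    ring
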